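/- Every group homomorphism from the profinite completion Ẑ of the integers to a finite group (with the discrete topology) is continuous. -/
import Mathlib


open scoped Classical

/-- Each finite ring `ZMod n` gets the discrete topology. -/
instance (n : ℕ+) : TopologicalSpace (ZMod (n : ℕ)) := ⊥

/-- The profinite completion `Ẑ = lim← ℤ/nℤ`, realised as the additive subgroup of
`∏ n, ℤ/nℤ` consisting of compatible sequences of remainder classes. -/
def ZHatSubgroup : AddSubgroup ((n : ℕ+) → ZMod (n : ℕ)) where
  carrier := {f | ∀ (m n : ℕ+) (h : (m : ℕ) ∣ (n : ℕ)),
    ZMod.castHom h (ZMod (m : ℕ)) (f n) = f m}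
  add_mem' := by
    intro a b ha hb m n h
    simp [map_add, ha m n h, hb m n h]
  zero_mem' := by intro m n h; simp
  neg_mem' := by
    intro a ha m n h
    simp [map_neg, ha m n h]

/-- The profinite completion of `ℤ`, with its subspace (profinite) topology. -/
abbrev ZHat : Type := ↥ZHatSubgroup

lemma zhat_div (m : ℕ+) (x : ZHat) (hx : (x : (n : ℕ+) → ZMod (n : ℕ)) m = 0) :
    ∃ y : ZHat, (m : ℕ) • y = x := by
  have hm : ∀ n : ℕ+, NeZero ((n : ℕ)) := fun n => ⟨n.pos.ne'⟩
  set X : (k : ℕ+) → ZMod (k : ℕ) := (x : (k : ℕ+) → ZMod (k : ℕ)) with hX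
  set V : ℕ+ → ℕ := fun n => (X (n * m)).val with hV
  have hdvd : ∀ n : ℕ+, (m : ℕ) ∣ V n := by
    intro n
    haveI := hm (n*m)
    have hd : (m : ℕ) ∣ ((n*m : ℕ+) : ℕ) := ⟨n, by push_cast; ring⟩
    rw [← ZMod.natCast_eq_zero_iff]
    calc ((V n : ℕ) : ZMod (m : ℕ)) = ZMod.castHom hd (ZMod (m : ℕ)) (X (n*m)) := by
          rw [ZMod.castHom_apply, hV, ZMod.natCast_val]
      _ = 0 := by rw [x.2 m (n*m) hd]; exact hx
  have hval : ∀ n : ℕ+, ((V n : ℕ) : ZMod (n : ℕ)) = X n := by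
    intro n
    haveI := hm (n*m)
    have hd : ((n : ℕ)) ∣ ((n*m : ℕ+) : ℕ) := ⟨m, by push_cast; ring⟩
    calc ((V n : ℕ) : ZMod (n : ℕ)) = ZMod.castHom hd (ZMod (n : ℕ)) (X (n*m)) := by
          rw [ZMod.castHom_apply, hV, ZMod.natCast_val]
      _ = X n := x.2 n (n*m) hd
  have hy : (fun n : ℕ+ => ((V n / (m : ℕ) : ℕ) : ZMod (n : ℕ))) ∈ ZHatSubgroup := by
    intro a b hab
    haveI := hm (a*m); haveI := hm (b*m)
    have hd : ((a * m : ℕ+) : ℕ) ∣ ((b * m : ℕ+) : ℕ) := by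
      push_cast; exact mul_dvd_mul hab dvd_rfl
    have key : V b ≡ V a [MOD ((a*m : ℕ+) : ℕ)] := by
      rw [← ZMod.natCast_eq_natCast_iff]
      calc ((V b : ℕ) : ZMod ((a*m : ℕ+) : ℕ))
          = ZMod.castHom hd (ZMod ((a*m : ℕ+) : ℕ)) (X (b*m)) := by
            rw [ZMod.castHom_apply, hV, ZMod.natCast_val]
        _ = X (a*m) := x.2 (a*m) (b*m) hd
        _ = ((V a : ℕ) : ZMod ((a*m : ℕ+) : ℕ)) := by rw [hV, ZMod.natCast_zmod_val]
    rw [map_natCast, ZMod.natCast_eq_natCast_iff]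
    rw [Nat.modEq_iff_dvd] at key ⊢
    obtain ⟨k, hk⟩ := key
    have e1 : ((V b / (m:ℕ) : ℕ) : ℤ) * (m : ℕ) = (V b : ℤ) := by
      rw [← Nat.cast_mul, Nat.div_mul_cancel (hdvd b)]
    have e2 : ((V a / (m:ℕ) : ℕ) : ℤ) * (m : ℕ) = (V a : ℤ) := by
      rw [← Nat.cast_mul, Nat.div_mul_cancel (hdvd a)]
    have hm0 : ((m : ℕ) : ℤ) ≠ 0 := by exact_mod_cast m.pos.ne'
    refine ⟨k, mul_right_cancel₀ hm0 ?_⟩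
    have : (((a*m : ℕ+) : ℕ) : ℤ) = ((a:ℕ) : ℤ) * ((m:ℕ) : ℤ) := by push_cast; ring
    rw [sub_mul, e1, e2, mul_assoc, mul_comm k, ← mul_assoc, ← this, ← hk]
  refine ⟨⟨_, hy⟩, ?_⟩
  apply Subtype.ext
  funext n
  show (m : ℕ) • ((V n / (m : ℕ) : ℕ) : ZMod (n : ℕ)) = X n
  rw [nsmul_eq_mul, ← Nat.cast_mul, Nat.mul_div_cancel' (hdvd n), hval n]

theorem stmt_17 (G : Type) [AddGroup G] [Finite G]
    [TopologicalSpace G] [DiscreteTopology G] (f : ZHat →+ G) :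
    Continuous f := by
  haveI : Fintype G := Fintype.ofFinite G
  set m : ℕ+ := ⟨Fintype.card G, Fintype.card_pos⟩ with hm
  have hker : ∀ z : ZHat, (z : (n : ℕ+) → ZMod (n : ℕ)) m = 0 → f z = 0 := by
    intro z hz
    obtain ⟨y, hy⟩ := zhat_div m z hz
    rw [← hy, map_nsmul]
    exact card_nsmul_eq_zero
  have hφ : Continuous fun z : ZHat => (z : (n : ℕ+) → ZMod (n : ℕ)) m :=
    (continuous_apply m).comp continuous_subtype_val
  rw [continuous_def]
  intro s _
  rw [isOpen_iff_mem_nhds]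
  intro x hx
  have hopen : IsOpen {z : ZHat | (z : (n : ℕ+) → ZMod (n : ℕ)) m
      = (x : (n : ℕ+) → ZMod (n : ℕ)) m} := by
    have : DiscreteTopology (ZMod ((m : ℕ+) : ℕ)) := ⟨rfl⟩
    exact hφ.isOpen_preimage {(x : (n : ℕ+) → ZMod (n : ℕ)) m} (isOpen_discrete _)
  refine Filter.mem_of_superset (hopen.mem_nhds rfl) ?_
  intro y hy
  have : f (y - x) = 0 := by
    apply hker
    show (y : (n : ℕ+) → ZMod (n : ℕ)) m - (x : (n : ℕ+) → ZMod (n : ℕ)) m = 0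
    rw [hy, sub_self]
  have hfy : f y = f x := by
    have h2 := map_sub f y x
    rw [this] at h2
    exact (sub_eq_zero.mp h2.symm)
  show f y ∈ s
  rw [hfy]; exact hx
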